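/- Let q ∈ (0,1), θ = min(q, 1-q), and let D be a distribution on [0,1] with q-expectile f*. Then for any v̂ ∈ [0,1], E_{v∼D}[g(v̂, v) - g(f*, v)] ≥ θ·(v̂ - f*)², where g(u, v) = (1-q)((v-u)_+)² + q((u-v)_+)² is the expectile loss. -/

import Mathlib

open MeasureTheory Set

private lemma pospart_sq_convex (x y l : ℝ) (h0 : 0 ≤ l) (h1 : l ≤ 1) :
    (max ((1-l)*x + l*y) 0)^2 ≤ (1-l)*(max x 0)^2 + l*(max y 0)^2 := by
  have ha : x ≤ max x 0 := le_max_left _ _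
  have hb : y ≤ max y 0 := le_max_left _ _
  have ha0 : 0 ≤ max x 0 := le_max_right _ _
  have hb0 : 0 ≤ max y 0 := le_max_right _ _
  have hr1 : 0 ≤ (1-l)*(max x 0)^2 := mul_nonneg (by linarith) (sq_nonneg _)
  have hr2 : 0 ≤ l*(max y 0)^2 := mul_nonneg h0 (sq_nonneg _)
  rcases le_or_gt ((1-l)*x + l*y) 0 with h | h
  · rw [max_eq_right h]
    nlinarith
  · rw [max_eq_left h.le]
    have hK : (1-l)*x + l*y ≤ (1-l)*(max x 0) + l*(max y 0) := by nlinarith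
    have h2 : ((1-l)*x + l*y)^2 ≤ ((1-l)*(max x 0) + l*(max y 0))^2 :=
      pow_le_pow_left₀ h.le hK 2
    nlinarith [sq_nonneg (max x 0 - max y 0), mul_nonneg h0 (sub_nonneg.2 h1)]

private lemma sq_decomp (t : ℝ) : (max t 0)^2 + (max (-t) 0)^2 = t^2 := by
  rcases le_total t 0 with h | h
  · rw [max_eq_right h, max_eq_left (neg_nonneg.2 h)]; ring
  · rw [max_eq_left h, max_eq_right (neg_nonpos.2 h)]; ring

private lemma key_ineq (q l x y : ℝ) (hq0 : 0 < q) (hq1 : q < 1) (hl0 : 0 ≤ l) (hl1 : l ≤ 1) :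
    (1-q)*(max (-((1-l)*x + l*y)) 0)^2 + q*(max ((1-l)*x + l*y) 0)^2
      ≤ (1-l)*((1-q)*(max (-x) 0)^2 + q*(max x 0)^2)
        + l*((1-q)*(max (-y) 0)^2 + q*(max y 0)^2)
        - min q (1-q) * (l*(1-l)*(x-y)^2) := by
  have hm := sq_decomp ((1-l)*x+l*y)
  have hx := sq_decomp x
  have hy := sq_decomp y
  have hP : (max ((1-l)*x+l*y) 0)^2 ≤ (1-l)*(max x 0)^2 + l*(max y 0)^2 :=
    pospart_sq_convex x y l hl0 hl1
  have hN : (max (-((1-l)*x+l*y)) 0)^2 ≤ (1-l)*(max (-x) 0)^2 + l*(max (-y) 0)^2 := by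
    have h := pospart_sq_convex (-x) (-y) l hl0 hl1
    have e : (1-l)*(-x) + l*(-y) = -((1-l)*x + l*y) := by ring
    rwa [e] at h
  rcases le_total q (1-q) with h | h
  · rw [min_eq_left h]
    have h12 : (0:ℝ) ≤ 1 - 2*q := by linarith
    have hprod := mul_nonneg h12 (sub_nonneg.2 hN)
    have exl : q*(1-l)*((max x 0)^2 + (max (-x) 0)^2) = q*(1-l)*x^2 := by rw [hx]
    have eyl : q*l*((max y 0)^2 + (max (-y) 0)^2) = q*l*y^2 := by rw [hy]
    have eml : q*((max ((1-l)*x+l*y) 0)^2 + (max (-((1-l)*x+l*y)) 0)^2)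
        = q*((1-l)*x+l*y)^2 := by rw [hm]
    nlinarith [hprod, exl, eyl, eml]
  · rw [min_eq_right h]
    have h12 : (0:ℝ) ≤ 2*q - 1 := by linarith
    have hprod := mul_nonneg h12 (sub_nonneg.2 hP)
    have exl : (1-q)*(1-l)*((max x 0)^2 + (max (-x) 0)^2) = (1-q)*(1-l)*x^2 := by rw [hx]
    have eyl : (1-q)*l*((max y 0)^2 + (max (-y) 0)^2) = (1-q)*l*y^2 := by rw [hy]
    have eml : (1-q)*((max ((1-l)*x+l*y) 0)^2 + (max (-((1-l)*x+l*y)) 0)^2)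
        = (1-q)*((1-l)*x+l*y)^2 := by rw [hm]
    nlinarith [hprod, exl, eyl, eml]

/-- Excess expectile loss at `vhat` relative to the `q`-expectile `f*` is at least
`θ (vhat - f*)²` with `θ = min q (1-q)`. -/
theorem expectile_excess_loss_lower_bound
    (q : ℝ) (hq : q ∈ Ioo (0:ℝ) 1)
    (μ : Measure ℝ) [IsProbabilityMeasure μ]
    (hsupp : ∀ᵐ v ∂μ, v ∈ Icc (0:ℝ) 1)
    (g : ℝ → ℝ → ℝ)
    (hg : ∀ u v, g u v = (1 - q) * (max (v - u) 0) ^ 2 + q * (max (u - v) 0) ^ 2)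
    (fstar : ℝ) (hfstar : fstar ∈ Icc (0:ℝ) 1)
    (hmin : ∀ u ∈ Icc (0:ℝ) 1, (∫ v, g fstar v ∂μ) ≤ ∫ v, g u v ∂μ)
    (vhat : ℝ) (hvhat : vhat ∈ Icc (0:ℝ) 1) :
    min q (1 - q) * (vhat - fstar) ^ 2 ≤ ∫ v, (g vhat v - g fstar v) ∂μ := by
  obtain ⟨hq0, hq1⟩ := hq
  -- integrability of v ↦ g u v for u ∈ [0,1]
  have hint : ∀ u ∈ Icc (0:ℝ) 1, Integrable (fun v => g u v) μ := by
    intro u hu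
    have hcont : Continuous fun v => g u v := by
      simp only [hg]
      fun_prop
    refine (integrable_const (1:ℝ)).mono' hcont.aestronglyMeasurable ?_
    filter_upwards [hsupp] with v hv
    rw [hg]
    have h1 : max (v-u) 0 ≤ 1 := max_le (by linarith [hv.2, hu.1]) one_pos.le
    have h2 : max (u-v) 0 ≤ 1 := max_le (by linarith [hv.1, hu.2]) one_pos.le
    have h1' : (0:ℝ) ≤ max (v-u) 0 := le_max_right _ _
    have h2' : (0:ℝ) ≤ max (u-v) 0 := le_max_right _ _
    have h1s : (max (v-u) 0)^2 ≤ 1 := by nlinarith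
    have h2s : (max (u-v) 0)^2 ≤ 1 := by nlinarith
    have k1 : 0 ≤ (1-q)*(1 - (max (v-u) 0)^2) := mul_nonneg (by linarith) (by linarith)
    have k2 : 0 ≤ q*(1 - (max (u-v) 0)^2) := mul_nonneg hq0.le (by linarith)
    have k3 : 0 ≤ (1-q)*(max (v-u) 0)^2 := mul_nonneg (by linarith) (sq_nonneg _)
    have k4 : 0 ≤ q*(max (u-v) 0)^2 := mul_nonneg hq0.le (sq_nonneg _)
    rw [Real.norm_eq_abs, abs_le]
    constructor
    · nlinarith
    · nlinarith
  have hIsub : ∫ v, (g vhat v - g fstar v) ∂μ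
      = (∫ v, g vhat v ∂μ) - ∫ v, g fstar v ∂μ :=
    integral_sub (hint vhat hvhat) (hint fstar hfstar)
  rw [hIsub]
  set If := ∫ v, g fstar v ∂μ with hIf
  set Iv := ∫ v, g vhat v ∂μ with hIv
  have hI1 : Integrable (fun v => g fstar v) μ := hint fstar hfstar
  have hI2 : Integrable (fun v => g vhat v) μ := hint vhat hvhat
  -- main step for each λ ∈ (0,1]
  have hstep : ∀ l : ℝ, 0 < l → l ≤ 1 →
      min q (1-q) * ((1-l) * (vhat - fstar)^2) ≤ Iv - If := by
    intro l hl0 hl1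
    have hu01 : (1-l)*fstar + l*vhat ∈ Icc (0:ℝ) 1 := by
      constructor
      · nlinarith [hfstar.1, hvhat.1]
      · nlinarith [hfstar.2, hvhat.2]
    have hptwise : ∀ v, g ((1-l)*fstar + l*vhat) v
        ≤ (1-l) * g fstar v + l * g vhat v
          - min q (1-q) * (l*(1-l)*(vhat - fstar)^2) := by
      intro v
      have h := key_ineq q l (fstar - v) (vhat - v) hq0 hq1 hl0.le hl1
      rw [hg, hg, hg]
      have e1 : v - ((1-l)*fstar + l*vhat) = -((1-l)*(fstar - v) + l*(vhat - v)) := by ring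
      have e2 : (1-l)*fstar + l*vhat - v = (1-l)*(fstar - v) + l*(vhat - v) := by ring
      have e3 : v - fstar = -(fstar - v) := by ring
      have e4 : v - vhat = -(vhat - v) := by ring
      have e5 : (vhat - fstar)^2 = ((fstar - v) - (vhat - v))^2 := by ring
      rw [e1, e2, e3, e4, e5]
      linarith [h]
    have hIc : Integrable (fun v => (1-l) * g fstar v + l * g vhat v) μ := by
      exact (hI1.const_mul (1-l)).add (hI2.const_mul l)
    have hintRHS : Integrable (fun v => (1-l) * g fstar v + l * g vhat v
        - min q (1-q) * (l*(1-l)*(vhat - fstar)^2)) μ := by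
      exact hIc.sub (integrable_const _)
    have hIneq : ∫ v, g ((1-l)*fstar + l*vhat) v ∂μ
        ≤ ∫ v, ((1-l) * g fstar v + l * g vhat v
            - min q (1-q) * (l*(1-l)*(vhat - fstar)^2)) ∂μ :=
      integral_mono (hint _ hu01) hintRHS hptwise
    have hRHS : ∫ v, ((1-l) * g fstar v + l * g vhat v
          - min q (1-q) * (l*(1-l)*(vhat - fstar)^2)) ∂μ
        = (1-l) * If + l * Iv - min q (1-q) * (l*(1-l)*(vhat - fstar)^2) := by
      rw [integral_sub hIc (integrable_const _),
        integral_add (hI1.const_mul (1-l)) (hI2.const_mul l),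
        integral_const_mul, integral_const_mul, integral_const, probReal_univ]
      simp
      rfl
    have hmin' := hmin _ hu01
    rw [hRHS] at hIneq
    have h2 : l * (min q (1-q) * ((1-l) * (vhat - fstar)^2)) ≤ l * (Iv - If) := by
      nlinarith [hmin', hIneq]
    exact le_of_mul_le_mul_left h2 hl0
  -- take λ → 0 via ε-argument
  refine le_of_forall_pos_le_add ?_
  intro ε hε
  set c := min q (1-q) * (vhat - fstar)^2 with hc
  have hc0 : 0 ≤ c := mul_nonneg (le_min hq0.le (by linarith)) (sq_nonneg _)
  set l := min (1/2 : ℝ) (ε / (c+1)) with hl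
  have hl0 : 0 < l := lt_min (by norm_num) (div_pos hε (by linarith))
  have hl1 : l ≤ 1 := (min_le_left _ _).trans (by norm_num)
  have h := hstep l hl0 hl1
  have hlc : l * (c+1) ≤ ε := by
    have h' : l ≤ ε/(c+1) := min_le_right _ _
    rwa [le_div_iff₀ (by linarith)] at h'
  have hlc2 : l * c ≤ ε := by linarith [hlc, hl0.le]
  have he : min q (1-q) * ((1-l) * (vhat - fstar)^2) = c - l * c := by
    rw [hc]; ring
  rw [he] at h
  linarith [h, hlc2]
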